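/- arXiv:2006.08563 — 3 statements merged into one kernel-verified Lean document; each statement's English description precedes it below -/
import Mathlib

section
/- Let n_1, n_2, …, n_s be positive integers with gcd(n_1, n_2, …, n_s) = 1, and let g(z) = 1 − (z^{n_1} + z^{n_2} + … + z^{n_s}). Then g has a unique complex root α of smallest modulus; moreover, α is the unique positive real root of g, and α is a root of multiplicity one. -/
open Polynomial

/-- **Lemma 2.8.** Let `n₁, …, n_s` be positive integers with `gcd(n₁, …, n_s) = 1`.  Then the
polynomial `g(z) = 1 - (z^{n₁} + ⋯ + z^{n_s})` has a unique complex root `α` of smallest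
modulus; moreover `α` is the unique positive real root of `g`, and `α` has multiplicity one. -/
theorem unique_smallest_root {s : ℕ} (hs : 0 < s) (n : Fin s → ℕ) (hn : ∀ i, 0 < n i)
    (hgcd : Finset.univ.gcd n = 1)
    (g : Polynomial ℂ) (hg : g = 1 - ∑ i : Fin s, Polynomial.X ^ n i) :
    ∃ α : ℂ, g.IsRoot α ∧ 0 < α.re ∧ α.im = 0 ∧
      (∀ z : ℂ, g.IsRoot z → z ≠ α → ‖α‖ < ‖z‖) ∧
      (∀ x : ℝ, 0 < x → g.IsRoot (x : ℂ) → (x : ℂ) = α) ∧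
      g.rootMultiplicity α = 1 := by
  classical
  have hne : (Finset.univ : Finset (Fin s)).Nonempty := ⟨⟨0, hs⟩, Finset.mem_univ _⟩
  -- the real auxiliary function
  set F : ℝ → ℝ := fun x => ∑ i : Fin s, x ^ n i with hF
  have hFmono : StrictMonoOn F (Set.Ici 0) := by
    intro a ha b hb hab
    exact Finset.sum_lt_sum_of_nonempty hne fun i _ =>
      pow_lt_pow_left₀ hab ha (hn i).ne'
  have hFcont : Continuous F := by
    apply continuous_finset_sum
    intro i _
    exact continuous_pow (n i)
  have hF0 : F 0 = 0 := by
    simp only [hF]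
    exact Finset.sum_eq_zero fun i _ => zero_pow (hn i).ne'
  have hF1 : (1 : ℝ) ≤ F 1 := by
    simp only [hF, one_pow, Finset.sum_const, Finset.card_univ, Fintype.card_fin, nsmul_eq_mul,
      mul_one]
    exact_mod_cast hs
  obtain ⟨α, hαmem, hFα⟩ := intermediate_value_Icc (by norm_num : (0:ℝ) ≤ 1)
    hFcont.continuousOn (by rw [hF0]; exact ⟨zero_le_one, hF1⟩)
  have hα0 : 0 < α := by
    rcases lt_or_eq_of_le hαmem.1 with h | h
    · exact h
    · exfalso; rw [← h, hF0] at hFα; norm_num at hFα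
  -- complex root
  set αc : ℂ := (α : ℂ) with hαc
  have hαc0 : αc ≠ 0 := by
    simp [hαc, Complex.ofReal_eq_zero, hα0.ne']
  have hαcabs : ‖αc‖ = α := by
    simp [hαc, Complex.norm_real, abs_of_pos hα0]
  -- characterization of roots
  have hroot_iff : ∀ z : ℂ, g.IsRoot z ↔ ∑ i : Fin s, z ^ n i = 1 := by
    intro z
    rw [hg]
    simp only [IsRoot, eval_sub, eval_one, eval_finset_sum, eval_pow, eval_X, sub_eq_zero]
    exact eq_comm
  have hαroot : ∑ i : Fin s, αc ^ n i = 1 := by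
    have : ((∑ i : Fin s, α ^ n i : ℝ) : ℂ) = ((1 : ℝ) : ℂ) := by exact_mod_cast hFα
    push_cast at this
    simpa [hαc] using this
  have hgroot : g.IsRoot αc := (hroot_iff αc).mpr hαroot
  -- key: any root z with |z| ≤ α satisfies z = αc
  have key : ∀ z : ℂ, (∑ i : Fin s, z ^ n i = 1) → ‖z‖ ≤ α → z = αc := by
    intro z hz hle
    have habs : (1 : ℝ) ≤ F ‖z‖ := by
      calc (1 : ℝ) = ‖∑ i : Fin s, z ^ n i‖ := by rw [hz]; simp
        _ ≤ ∑ i : Fin s, ‖z ^ n i‖ := norm_sum_le _ _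
        _ = F ‖z‖ := by simp [hF, norm_pow]
    have heq : ‖z‖ = α := by
      rcases lt_or_eq_of_le hle with h | h
      · exfalso
        have := hFmono (Set.mem_Ici.mpr (norm_nonneg z)) (Set.mem_Ici.mpr hα0.le) h
        rw [hFα] at this
        linarith
      · exact h
    -- equality in the triangle inequality
    have hsumabs : ∑ i : Fin s, ‖z ^ n i‖ = 1 := by
      have : ∑ i : Fin s, ‖z ^ n i‖ = F ‖z‖ := by
        simp [hF, norm_pow]
      rw [this, heq, hFα]
    have hre : ∑ i : Fin s, (z ^ n i).re = 1 := by
      have := congrArg Complex.re hz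
      simpa [Complex.re_sum] using this
    have hterm : ∀ i ∈ (Finset.univ : Finset (Fin s)),
        (z ^ n i).re = ‖z ^ n i‖ := by
      have hle' : ∀ i ∈ (Finset.univ : Finset (Fin s)),
          (z ^ n i).re ≤ ‖z ^ n i‖ := fun i _ => Complex.re_le_norm _
      exact (Finset.sum_eq_sum_iff_of_le hle').mp (by rw [hre, hsumabs])
    -- each z^{n i} equals αc^{n i}
    have hpow : ∀ i : Fin s, z ^ n i = αc ^ n i := by
      intro i
      have h1 : (z ^ n i).re = ‖z ^ n i‖ := hterm i (Finset.mem_univ i)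
      have him : (z ^ n i).im = 0 := by
        have hsq := Complex.sq_norm (z ^ n i)
        rw [Complex.normSq_apply, ← h1] at hsq
        nlinarith [sq_nonneg (z ^ n i).im]
      have hzr : z ^ n i = (((z ^ n i).re : ℝ) : ℂ) := by
        conv_lhs => rw [← Complex.re_add_im (z ^ n i)]
        rw [him]
        simp
      rw [hzr, h1, norm_pow, heq, hαc]
      push_cast
      ring
    -- use gcd = 1
    have hw : ∀ i : Fin s, (z / αc) ^ n i = 1 := by
      intro i
      rw [div_pow, hpow i, div_self (pow_ne_zero _ hαc0)]
    have hdvd : orderOf (z / αc) ∣ Finset.univ.gcd n :=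
      Finset.dvd_gcd fun i _ => orderOf_dvd_of_pow_eq_one (hw i)
    rw [hgcd, Nat.dvd_one, orderOf_eq_one_iff] at hdvd
    field_simp at hdvd
    exact hdvd
  -- derivative nonzero at αc
  have hderiv : eval αc (derivative g) ≠ 0 := by
    have hcalc : eval αc (derivative g)
        = -((∑ i : Fin s, (n i : ℝ) * α ^ (n i - 1) : ℝ) : ℂ) := by
      rw [hg]
      simp only [derivative_sub, derivative_one, map_sum, derivative_X_pow, zero_sub, eval_neg,
        eval_finset_sum, eval_mul, eval_C, eval_pow, eval_X]
      push_cast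
      simp [hαc]
    rw [hcalc]
    have hpos : 0 < ∑ i : Fin s, (n i : ℝ) * α ^ (n i - 1) := by
      apply Finset.sum_pos _ hne
      intro i _
      exact mul_pos (by exact_mod_cast hn i) (pow_pos hα0 _)
    simp only [ne_eq, neg_eq_zero, Complex.ofReal_eq_zero]
    exact hpos.ne'
  have hgne : g ≠ 0 := by
    intro h
    have : eval 0 g = 0 := by rw [h]; simp
    rw [hg] at this
    simp only [eval_sub, eval_one, eval_finset_sum, eval_pow, eval_X] at this
    rw [Finset.sum_eq_zero (fun i _ => zero_pow (hn i).ne')] at this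
    norm_num at this
  refine ⟨αc, hgroot, by simpa [hαc] using hα0, by simp [hαc], ?_, ?_, ?_⟩
  · -- smallest modulus, strict
    intro z hz hzne
    by_contra hcon
    push_neg at hcon
    rw [hαcabs] at hcon
    exact hzne (key z ((hroot_iff z).mp hz) hcon)
  · -- unique positive real root
    intro x hx hxroot
    have hxsum : ∑ i : Fin s, (x : ℝ) ^ n i = 1 := by
      have := (hroot_iff _).mp hxroot
      have h2 : ((∑ i : Fin s, x ^ n i : ℝ) : ℂ) = ((1:ℝ) : ℂ) := by
        push_cast
        simpa using this
      exact_mod_cast h2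
    have : F x = F α := by rw [hFα]; exact hxsum
    have hxα : x = α :=
      hFmono.injOn (Set.mem_Ici.mpr hx.le) (Set.mem_Ici.mpr hα0.le) this
    rw [hxα]
  · -- multiplicity one
    have h1 : 1 ≤ g.rootMultiplicity αc := (rootMultiplicity_pos hgne).mpr hgroot
    have h2 : (derivative g).rootMultiplicity αc = g.rootMultiplicity αc - 1 :=
      derivative_rootMultiplicity_of_root hgroot
    have h3 : (derivative g).rootMultiplicity αc = 0 :=
      rootMultiplicity_eq_zero hderiv
    omega
end

section
/- Let S = {φ_1, …, φ_s} be a set of polynomials defined over a field K of characteristic zero, and let a_i·x^{d_i} denote the leading term of φ_i. If {d_1, …, d_s} is a multiplicatively independent set of integers and {a_1, …, a_s} is a multiplicatively independent set in K*, then the monoid M_S generated by S under composition is free with basis S: whenever θ_1 ∘ … ∘ θ_n = τ_1 ∘ … ∘ τ_m with all θ_i, τ_j ∈ S, one has n = m and θ_i = τ_i for all i. -/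
open Polynomial

section Aux

variable {K : Type*} [Field K] [CharZero K] {s : ℕ}

/-- Composition of the polynomials indexed by a list. -/
noncomputable def Fc (φ : Fin s → Polynomial K) (I : List (Fin s)) : Polynomial K :=
  I.foldr (fun i q => (φ i).comp q) X

@[simp] lemma Fc_nil (φ : Fin s → Polynomial K) : Fc φ [] = X := rfl

@[simp] lemma Fc_cons (φ : Fin s → Polynomial K) (i : Fin s) (I : List (Fin s)) :
    Fc φ (i :: I) = (φ i).comp (Fc φ I) := rfl

/-- Exponent of `a t` in the leading coefficient of `Fc φ I`. -/
def Ev (d : Fin s → ℕ) (t : Fin s) : List (Fin s) → ℕ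
  | [] => 0
  | j :: I => (if t = j then 1 else 0) + d j * Ev d t I

/-- Product of degrees over a list. -/
def Pd (d : Fin s → ℕ) (I : List (Fin s)) : ℕ := (I.map d).prod

@[simp] lemma Pd_nil (d : Fin s → ℕ) : Pd d [] = 1 := rfl

@[simp] lemma Pd_cons (d : Fin s → ℕ) (j : Fin s) (I : List (Fin s)) :
    Pd d (j :: I) = d j * Pd d I := by simp [Pd]

lemma Pd_pos {d : Fin s → ℕ} (hd : ∀ t, 0 < d t) (I : List (Fin s)) : 0 < Pd d I := by
  induction I with
  | nil => simp
  | cons j I ih => simpa using Nat.mul_pos (hd j) ih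

lemma natDegree_Fc {φ : Fin s → Polynomial K} {d : Fin s → ℕ}
    (hdeg : ∀ i, (φ i).natDegree = d i) (I : List (Fin s)) :
    (Fc φ I).natDegree = Pd d I := by
  induction I with
  | nil => simp [natDegree_X]
  | cons j I ih => simp [natDegree_comp, hdeg, ih]

lemma lc_Fc {φ : Fin s → Polynomial K} {d : Fin s → ℕ} {a : Fin s → K}
    (hdeg : ∀ i, (φ i).natDegree = d i) (hlc : ∀ i, (φ i).leadingCoeff = a i)
    (hdpos : ∀ i, 0 < d i) (I : List (Fin s)) :
    (Fc φ I).leadingCoeff = ∏ t, a t ^ Ev d t I := by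
  induction I with
  | nil => simp [Ev]
  | cons j I ih =>
      have hne : (Fc φ I).natDegree ≠ 0 := by
        rw [natDegree_Fc hdeg]
        exact (Pd_pos hdpos I).ne'
      rw [Fc_cons, leadingCoeff_comp hne, hlc, ih, hdeg]
      simp only [Ev]
      rw [Finset.prod_congr rfl (fun t _ => pow_add (a t) _ _), Finset.prod_mul_distrib]
      congr 1
      · simp [Finset.prod_ite_eq' Finset.univ j (fun t => a t ^ 1)]
      · rw [← Finset.prod_pow]
        exact Finset.prod_congr rfl fun t _ => by rw [pow_mul']

lemma Fc_concat (φ : Fin s → Polynomial K) (I : List (Fin s)) (i : Fin s) :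
    Fc φ (I ++ [i]) = (Fc φ I).comp (φ i) := by
  induction I with
  | nil => simp
  | cons j I ih => simp [ih, comp_assoc]

lemma Ev_lt_Pd {d : Fin s → ℕ} (h2 : ∀ t, 2 ≤ d t) (t : Fin s) (I : List (Fin s)) :
    Ev d t I < Pd d I := by
  induction I with
  | nil => simp [Ev]
  | cons j I ih =>
      have hj := h2 j
      simp only [Ev, Pd_cons]
      have h1 : Ev d t I + 1 ≤ Pd d I := ih
      have hm := Nat.mul_le_mul_left (d j) h1
      rw [Nat.mul_add, mul_one] at hm
      have hite : (if t = j then 1 else 0) ≤ 1 := by split <;> omega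
      omega

lemma Ev_concat_self {d : Fin s → ℕ} (h1 : ∀ t, 1 ≤ d t) (i : Fin s) (I : List (Fin s)) :
    Pd d I ≤ Ev d i (I ++ [i]) := by
  induction I with
  | nil => simp [Ev]
  | cons j I ih =>
      simp only [List.cons_append, Ev, Pd_cons]
      calc d j * Pd d I ≤ d j * Ev d i (I ++ [i]) := Nat.mul_le_mul_left _ ih
        _ ≤ _ := Nat.le_add_left _ _

lemma Ev_concat_ne {d : Fin s → ℕ} (h2 : ∀ t, 2 ≤ d t) {t i : Fin s} (hti : t ≠ i)
    (I : List (Fin s)) : Ev d t (I ++ [i]) < Pd d I := by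
  induction I with
  | nil => simp [Ev, hti]
  | cons j I ih =>
      have hj := h2 j
      simp only [List.cons_append, Ev, Pd_cons, List.append_eq]
      have h1 : Ev d t (I ++ [i]) + 1 ≤ Pd d I := ih
      have hm := Nat.mul_le_mul_left (d j) h1
      rw [Nat.mul_add, mul_one] at hm
      have hite : (if t = j then 1 else 0) ≤ 1 := by split <;> omega
      omega

lemma comp_right_cancel {f g h : Polynomial K} (hh : h.natDegree ≠ 0)
    (heq : f.comp h = g.comp h) : f = g := by
  have : (f - g).comp h = 0 := by rw [sub_comp, heq, sub_self]
  rcases comp_eq_zero_iff.mp this with h0 | ⟨_, hC⟩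
  · exact sub_eq_zero.mp h0
  · exact absurd (by rw [hC, natDegree_C]) hh

end Aux

/-- **Theorem 4.3.** Let `S = {φ₁, …, φ_s}` be a set of polynomials over a field `K` of
characteristic zero with leading terms `aᵢ x^{dᵢ}`.  If the degrees `dᵢ` are multiplicatively
independent (in the positive rationals) and the leading coefficients `aᵢ` are multiplicatively
independent in `K*`, then the monoid generated by `S` under composition is free with basis
`S`. -/
theorem free_monoid_of_multiplicatively_independent {K : Type*} [Field K] [CharZero K]
    {s : ℕ} (φ : Fin s → Polynomial K) (d : Fin s → ℕ) (a : Fin s → K)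
    (hdeg : ∀ i, (φ i).natDegree = d i) (hlc : ∀ i, (φ i).leadingCoeff = a i)
    (hdpos : ∀ i, 0 < d i) (hane : ∀ i, a i ≠ 0)
    (hdind : ∀ k : Fin s → ℤ, (∏ i, (d i : ℚ) ^ k i) = 1 → ∀ i, k i = 0)
    (haind : ∀ k : Fin s → ℤ, (∏ i, a i ^ k i) = 1 → ∀ i, k i = 0) :
    ∀ L₁ L₂ : List (Polynomial K),
      (∀ p ∈ L₁, p ∈ Set.range φ) → (∀ p ∈ L₂, p ∈ Set.range φ) →
      L₁.foldr Polynomial.comp Polynomial.X = L₂.foldr Polynomial.comp Polynomial.X →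
      L₁ = L₂ := by
  -- every degree is at least 2
  have h2 : ∀ t, 2 ≤ d t := by
    intro t
    rcases Nat.lt_or_ge (d t) 2 with hlt | hge
    · interval_cases h : d t
      · exact absurd h (hdpos t).ne'
      · exfalso
        have := hdind (fun u => if u = t then 1 else 0) ?_ t
        · simp at this
        · rw [Finset.prod_eq_single t (fun u _ hu => by simp [hu]) (by simp)]
          simp [h]
    · exact hge
  -- equality of leading coefficient products gives equality of exponent vectors
  have hEv : ∀ I₁ I₂ : List (Fin s),
      (∏ t, a t ^ Ev d t I₁) = (∏ t, a t ^ Ev d t I₂) → ∀ t, Ev d t I₁ = Ev d t I₂ := by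
    intro I₁ I₂ hp t
    have key := haind (fun t => (Ev d t I₁ : ℤ) - (Ev d t I₂ : ℤ)) ?_ t
    · omega
    · have : ∀ t, a t ^ ((Ev d t I₁ : ℤ) - (Ev d t I₂ : ℤ))
          = a t ^ (Ev d t I₁) / a t ^ (Ev d t I₂) := by
        intro t
        rw [zpow_sub₀ (hane t), zpow_natCast, zpow_natCast]
      rw [Finset.prod_congr rfl fun t _ => this t, Finset.prod_div_distrib, hp, div_self]
      exact Finset.prod_ne_zero_iff.mpr fun t _ => pow_ne_zero _ (hane t)
  -- the key statement on index lists
  have key : ∀ I₁ I₂ : List (Fin s), Fc φ I₁ = Fc φ I₂ → I₁ = I₂ := by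
    intro I₁
    induction I₁ using List.reverseRecOn with
    | nil =>
        intro I₂ hF
        rcases List.eq_nil_or_concat I₂ with rfl | ⟨B, j, rfl⟩
        · rfl
        · simp only [List.concat_eq_append] at hF
          exfalso
          have hdg : (Fc φ ([] : List (Fin s))).natDegree = (Fc φ (B ++ [j])).natDegree := by
            rw [hF]
          rw [natDegree_Fc hdeg, natDegree_Fc hdeg] at hdg
          have hB : 0 < Pd d B := Pd_pos hdpos B
          have : Pd d (B ++ [j]) = Pd d B * d j := by simp [Pd]
          have hj := h2 j
          simp only [Pd_nil] at hdg
          rw [this] at hdg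
          nlinarith
    | append_singleton A i ih =>
        intro I₂ hF
        rcases List.eq_nil_or_concat I₂ with rfl | ⟨B, j, rfl⟩
        · exfalso
          have hdg : (Fc φ (A ++ [i])).natDegree = (Fc φ ([] : List (Fin s))).natDegree := by
            rw [hF]
          rw [natDegree_Fc hdeg, natDegree_Fc hdeg] at hdg
          have hA : 0 < Pd d A := Pd_pos hdpos A
          have : Pd d (A ++ [i]) = Pd d A * d i := by simp [Pd]
          have hi := h2 i
          simp only [Pd_nil] at hdg
          rw [this] at hdg
          nlinarith
        · simp only [List.concat_eq_append] at hF ⊢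
          -- both lists end with an element
          have hlcs : (∏ t, a t ^ Ev d t (A ++ [i])) = ∏ t, a t ^ Ev d t (B ++ [j]) := by
            rw [← lc_Fc hdeg hlc hdpos, ← lc_Fc hdeg hlc hdpos, hF]
          have hE := hEv _ _ hlcs
          have hij : i = j := by
            by_contra hne
            have h1 : Pd d A ≤ Ev d i (A ++ [i]) := Ev_concat_self (fun t => (hdpos t)) i A
            have h2' : Ev d i (B ++ [j]) < Pd d B := Ev_concat_ne h2 hne B
            have h3 : Pd d B ≤ Ev d j (B ++ [j]) := Ev_concat_self (fun t => (hdpos t)) j B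
            have h4 : Ev d j (A ++ [i]) < Pd d A := Ev_concat_ne h2 (Ne.symm hne) A
            have e1 := hE i
            have e2 := hE j
            omega
          subst hij
          rw [Fc_concat, Fc_concat] at hF
          have hdi : (φ i).natDegree ≠ 0 := by rw [hdeg]; exact (hdpos i).ne'
          have := ih B (comp_right_cancel hdi hF)
          rw [this]
  -- transfer to polynomial lists
  intro L₁ L₂ hL₁ hL₂ heq
  have lift : ∀ L : List (Polynomial K), (∀ p ∈ L, p ∈ Set.range φ) →
      ∃ I : List (Fin s), I.map φ = L := by
    intro L
    induction L with
    | nil => exact fun _ => ⟨[], rfl⟩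
    | cons p L ih =>
        intro hmem
        obtain ⟨i, hi⟩ := hmem p (by simp)
        obtain ⟨I, hI⟩ := ih fun q hq => hmem q (by simp [hq])
        exact ⟨i :: I, by simp [hi, hI]⟩
  obtain ⟨I₁, rfl⟩ := lift L₁ hL₁
  obtain ⟨I₂, rfl⟩ := lift L₂ hL₂
  have hFc : ∀ I : List (Fin s),
      (I.map φ).foldr Polynomial.comp Polynomial.X = Fc φ I := by
    intro I
    induction I with
    | nil => rfl
    | cons j I ih => simp [Fc, ih]
  rw [hFc, hFc] at heq
  rw [key I₁ I₂ heq]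
end

section
/- Let S = {φ_1, …, φ_s} be a set of monomials φ_i = a_i·x^{d_i} over a field K of characteristic zero, where {d_1, …, d_s} is multiplicatively independent in the integers and {a_1, …, a_s} is multiplicatively independent in K*, and let θ = a·x^d be an element of S (so a = a_i for some i). Then: (1) if f_1, f_2, g ∈ M_S satisfy deg_a(f_1) ≤ deg_a(f_2) and deg(f_1) ≤ deg(f_2), then deg_a(f_1 ∘ g) ≤ deg_a(f_2 ∘ g); and (2) if f ∈ M_S and the number e = e_θ(f) of occurrences of θ in the unique expression of f as a composition of elements of S satisfies e ≥ 1, then deg_a(f) ≤ ((d^e − 1)/(d − 1))·(deg(f)/d^e). -/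
open Polynomial

/-- **Lemma 4.5.** Let `S = {φ₁, …, φ_s}` be a set of monomials `φᵢ = aᵢ x^{dᵢ}` over a field
`K` of characteristic zero, with the `dᵢ` multiplicatively independent in the integers and the
`aᵢ` multiplicatively independent in `K*`, and let `θ = a x^d ∈ S` (so `a = a_{i₀}`,
`d = d_{i₀}`).  Elements of the free monoid `M_S` are represented by lists of indices, composed
outermost-first; `A L i` is the exponent of `aᵢ` in the leading coefficient of the composition
of `L` (the `aᵢ`-degree), characterized by `leadingCoeff (comp L) = ∏ᵢ aᵢ^{A L i}`.  Then:
(1) if `deg_a f₁ ≤ deg_a f₂` and `deg f₁ ≤ deg f₂`, then `deg_a (f₁ ∘ g) ≤ deg_a (f₂ ∘ g)`;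
(2) if `e = e_θ(f) ≥ 1` occurrences of `θ` appear in `f`, then
`deg_a f ≤ ((dᵉ - 1)/(d - 1)) (deg f)/dᵉ`. -/
theorem a_degree_estimates {K : Type*} [Field K] [CharZero K] {s : ℕ}
    (a : Fin s → K) (d : Fin s → ℕ)
    (hdpos : ∀ i, 0 < d i) (hane : ∀ i, a i ≠ 0)
    (hdind : ∀ k : Fin s → ℤ, (∏ i, (d i : ℚ) ^ k i) = 1 → ∀ i, k i = 0)
    (haind : ∀ k : Fin s → ℤ, (∏ i, a i ^ k i) = 1 → ∀ i, k i = 0)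
    (φ : Fin s → Polynomial K) (hφ : ∀ i, φ i = Polynomial.C (a i) * Polynomial.X ^ d i)
    (A : List (Fin s) → Fin s → ℕ)
    (hA : ∀ L : List (Fin s),
      ((L.map φ).foldr Polynomial.comp Polynomial.X).leadingCoeff = ∏ i, a i ^ A L i)
    (i₀ : Fin s) :
    (∀ L₁ L₂ G : List (Fin s),
      A L₁ i₀ ≤ A L₂ i₀ →
      ((L₁.map φ).foldr Polynomial.comp Polynomial.X).natDegree ≤
        ((L₂.map φ).foldr Polynomial.comp Polynomial.X).natDegree →
      A (L₁ ++ G) i₀ ≤ A (L₂ ++ G) i₀) ∧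
    (∀ L : List (Fin s), 1 ≤ L.count i₀ →
      (A L i₀ : ℚ) ≤
        (((d i₀ : ℚ) ^ L.count i₀ - 1) / ((d i₀ : ℚ) - 1)) *
          ((((L.map φ).foldr Polynomial.comp Polynomial.X).natDegree : ℚ) /
            (d i₀ : ℚ) ^ L.count i₀)) := by
  classical
  -- uniqueness of exponents in products of the `a i`
  have huniq : ∀ m n : Fin s → ℕ, (∏ i, a i ^ m i) = (∏ i, a i ^ n i) → ∀ i, m i = n i := by
    intro m n h i
    have h1 : (∏ i, a i ^ ((m i : ℤ) - (n i : ℤ))) = 1 := by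
      have : (∏ i, a i ^ ((m i : ℤ) - (n i : ℤ)))
          = (∏ i, a i ^ m i) / (∏ i, a i ^ n i) := by
        rw [← Finset.prod_div_distrib]
        refine Finset.prod_congr rfl fun j _ => ?_
        rw [zpow_sub₀ (hane j), zpow_natCast, zpow_natCast]
      rw [this, h, div_self]
      exact Finset.prod_ne_zero_iff.2 fun j _ => pow_ne_zero _ (hane j)
    have := haind _ h1 i
    omega
  -- structure of compositions as monomials
  have hstruct : ∀ L : List (Fin s),
      (L.map φ).foldr Polynomial.comp Polynomial.X
        = monomial ((L.map d).prod) (∏ i, a i ^ A L i) := by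
    intro L
    induction L with
    | nil =>
        have h0 : (∏ i, a i ^ A ([] : List (Fin s)) i) = 1 := by
          have := hA ([] : List (Fin s)); simpa using this.symm
        simpa [h0] using (monomial_one_one_eq_X (R := K)).symm
    | cons j L ih =>
        have hlc := hA (j :: L)
        have : ((j :: L).map φ).foldr Polynomial.comp Polynomial.X
            = monomial (d j * (L.map d).prod) (a j * (∏ i, a i ^ A L i) ^ d j) := by
          simp only [List.map_cons, List.foldr_cons, ih, hφ, mul_comp, C_comp, X_pow_comp,
            monomial_pow, C_mul_monomial]
          ring_nf
        rw [this] at hlc ⊢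
        rw [leadingCoeff_monomial] at hlc
        rw [hlc, List.map_cons, List.prod_cons]
  have hne : ∀ L : List (Fin s), (∏ i, a i ^ A L i) ≠ 0 :=
    fun L => Finset.prod_ne_zero_iff.2 fun j _ => pow_ne_zero _ (hane j)
  -- natDegree
  have hdeg : ∀ L : List (Fin s),
      ((L.map φ).foldr Polynomial.comp Polynomial.X).natDegree = (L.map d).prod := by
    intro L; rw [hstruct L, natDegree_monomial, if_neg (hne L)]
  -- A of nil
  have hAnil : ∀ i, A [] i = 0 := by
    intro i
    have h0 : (∏ i, a i ^ A ([] : List (Fin s)) i) = ∏ i, a i ^ (0 : ℕ) := by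
      have := hA ([] : List (Fin s)); simpa using this.symm
    exact huniq _ _ h0 i
  -- recursion for A
  have hrec : ∀ (j : Fin s) (L : List (Fin s)) (i : Fin s),
      A (j :: L) i = (if i = j then 1 else 0) + d j * A L i := by
    intro j L i
    have hform : ((j :: L).map φ).foldr Polynomial.comp Polynomial.X
        = monomial (d j * (L.map d).prod) (a j * (∏ i, a i ^ A L i) ^ d j) := by
      simp only [List.map_cons, List.foldr_cons, hstruct L, hφ, mul_comp, C_comp, X_pow_comp,
        monomial_pow, C_mul_monomial]
      ring_nf
    have h1 := (hstruct (j :: L)).symm.trans hform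
    rw [List.map_cons, List.prod_cons] at h1
    have hlc : (∏ i, a i ^ A (j :: L) i) = a j * (∏ i, a i ^ A L i) ^ d j := by
      have := congrArg Polynomial.leadingCoeff h1
      simpa [leadingCoeff_monomial] using this
    have key : (∏ i, a i ^ ((if i = j then 1 else 0) + d j * A L i))
        = a j * (∏ i, a i ^ A L i) ^ d j := by
      simp only [pow_add, Finset.prod_mul_distrib]
      congr 1
      · simp
      · rw [← Finset.prod_pow]
        exact Finset.prod_congr rfl fun i _ => by rw [mul_comm, pow_mul]
    exact huniq _ _ (hlc.trans key.symm) i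
  -- append formula
  have happ : ∀ (L G : List (Fin s)) (i : Fin s),
      A (L ++ G) i = A L i + (L.map d).prod * A G i := by
    intro L G i
    induction L with
    | nil => simp [hAnil]
    | cons j L ih =>
        rw [List.cons_append, hrec, hrec, ih, List.map_cons, List.prod_cons]
        ring
  -- d i₀ ≥ 2
  have hd2 : 2 ≤ d i₀ := by
    by_contra h
    have hd1 : d i₀ = 1 := by have := hdpos i₀; omega
    have hone : (∏ i, (d i : ℚ) ^ (if i = i₀ then (1:ℤ) else 0)) = 1 := by
      rw [Finset.prod_eq_single i₀]
      · simp [hd1]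
      · intro b _ hb; simp [hb]
      · simp
    have := hdind _ hone i₀
    simp at this
  -- the key estimate, by induction
  have hp : (2:ℚ) ≤ (d i₀ : ℚ) := by exact_mod_cast hd2
  have key : ∀ L : List (Fin s),
      ((d i₀ : ℚ)) ^ (L.count i₀) ≤ ((L.map d).prod : ℚ) ∧
      (A L i₀ : ℚ) * ((d i₀ : ℚ) - 1) * (d i₀ : ℚ) ^ (L.count i₀)
        ≤ ((d i₀ : ℚ) ^ (L.count i₀) - 1) * ((L.map d).prod : ℚ) := by
    intro L
    induction L with
    | nil => simp [hAnil]
    | cons j L ih =>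
        obtain ⟨ih1, ih2⟩ := ih
        have hq1 : (1:ℚ) ≤ (d i₀:ℚ) ^ (L.count i₀) := one_le_pow₀ (by linarith)
        have hdj : (1:ℚ) ≤ (d j : ℚ) := by exact_mod_cast hdpos j
        have hA0 : (0:ℚ) ≤ (A L i₀ : ℚ) := Nat.cast_nonneg _
        rw [List.count_cons, List.map_cons, List.prod_cons, hrec]
        simp only [beq_iff_eq]
        push_cast [-Nat.cast_list_prod]
        by_cases hji : j = i₀
        · subst hji
          simp only [if_true]
          constructor
          · rw [pow_succ]
            nlinarith
          · rw [pow_succ]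
            nlinarith [mul_le_mul_of_nonneg_left ih2 (by nlinarith : (0:ℚ) ≤ (d j:ℚ)^2),
              mul_le_mul_of_nonneg_left ih1 (by nlinarith : (0:ℚ) ≤ (d j:ℚ) - 1)]
        · have hij : i₀ ≠ j := fun h => hji h.symm
          simp only [if_neg hji, if_neg hij, add_zero, zero_add]
          have hD0 : (1:ℚ) ≤ ((L.map d).prod : ℚ) := le_trans hq1 ih1
          constructor
          · nlinarith [mul_le_mul_of_nonneg_right hdj (by linarith : (0:ℚ) ≤ ((L.map d).prod : ℚ))]
          · nlinarith [mul_le_mul_of_nonneg_left ih2 (by linarith : (0:ℚ) ≤ (d j:ℚ))]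
  constructor
  · intro L₁ L₂ G h1 h2
    rw [happ, happ]
    rw [hdeg, hdeg] at h2
    exact Nat.add_le_add h1 (Nat.mul_le_mul h2 le_rfl)
  · intro L hL
    have hq : (0:ℚ) < (d i₀:ℚ) ^ (L.count i₀) := by positivity
    obtain ⟨k1, k2⟩ := key L
    rw [hdeg, div_mul_div_comm, le_div_iff₀ (by nlinarith)]
    nlinarith [k2]
end
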